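/- For any η ∈ [0,1] and any α ∈ ℝ, with φ the logit loss, η·φ(-α) + (1-η)·φ(α) ≥ H(η), where H(η) = -η log₂ η - (1-η) log₂(1-η) is the binary entropy (with 0·log 0 = 0); equality holds when α = ln(η/(1-η)) for η ∈ (0,1). -/

import Mathlib

/-- The logit loss `φ(t) = log₂(1 + eᵗ)`. -/
noncomputable def logitLoss (t : ℝ) : ℝ := Real.log (1 + Real.exp t) / Real.log 2

/-- The binary entropy `H(η) = -η log₂ η - (1-η) log₂ (1-η)`
(note that `Real.log 0 = 0` in Mathlib, so the convention `0 · log 0 = 0` is automatic). -/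
noncomputable def binEntropy (η : ℝ) : ℝ :=
  -(η * Real.log η) / Real.log 2 - (1 - η) * Real.log (1 - η) / Real.log 2

lemma gibbs (η : ℝ) (hη : η ∈ Set.Icc (0:ℝ) 1) (p : ℝ) (hp : p ∈ Set.Ioo (0:ℝ) 1) :
    -(η * Real.log η) - (1 - η) * Real.log (1 - η)
      ≤ -(η * Real.log p) - (1 - η) * Real.log (1 - p) := by
  obtain ⟨hη0, hη1⟩ := hη
  obtain ⟨hp0, hp1⟩ := hp
  rcases eq_or_lt_of_le hη0 with h0 | h0
  · simp [← h0]
    have : Real.log (1 - p) ≤ 0 := Real.log_nonpos (by linarith) (by linarith)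
    linarith
  rcases eq_or_lt_of_le hη1 with h1 | h1
  · simp [h1]
    have : Real.log p ≤ 0 := Real.log_nonpos (by linarith) (by linarith)
    linarith
  · have h1' : 0 < 1 - η := by linarith
    have key1 : Real.log (p / η) ≤ p / η - 1 :=
      Real.log_le_sub_one_of_pos (by positivity)
    have key2 : Real.log ((1 - p) / (1 - η)) ≤ (1 - p) / (1 - η) - 1 :=
      Real.log_le_sub_one_of_pos (div_pos (by linarith) h1')
    rw [Real.log_div (ne_of_gt hp0) (ne_of_gt h0)] at key1
    rw [Real.log_div (by linarith) (ne_of_gt h1')] at key2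
    have c1 : p / η * η = p := div_mul_cancel₀ p (ne_of_gt h0)
    have c2 : (1 - p) / (1 - η) * (1 - η) = 1 - p := div_mul_cancel₀ _ (ne_of_gt h1')
    nlinarith [mul_le_mul_of_nonneg_left key1 (le_of_lt h0),
      mul_le_mul_of_nonneg_left key2 (le_of_lt h1')]

theorem logit_risk_ge_binary_entropy :
    (∀ η ∈ Set.Icc (0:ℝ) 1, ∀ α : ℝ,
      binEntropy η ≤ η * logitLoss (-α) + (1 - η) * logitLoss α) ∧
    (∀ η ∈ Set.Ioo (0:ℝ) 1,
      η * logitLoss (-(Real.log (η / (1 - η)))) + (1 - η) * logitLoss (Real.log (η / (1 - η)))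
        = binEntropy η) := by
  have hlog2 : (0:ℝ) < Real.log 2 := Real.log_pos (by norm_num)
  constructor
  · intro η hη α
    set p : ℝ := Real.exp α / (1 + Real.exp α) with hp
    have hea : 0 < Real.exp α := Real.exp_pos α
    have hden : 0 < 1 + Real.exp α := by linarith
    have hp0 : 0 < p := by positivity
    have hp1 : p < 1 := by
      rw [hp, div_lt_one hden]; linarith
    have hlogm : Real.log (1 + Real.exp (-α)) = -Real.log p := by
      rw [hp, Real.log_div (ne_of_gt hea) (ne_of_gt hden), neg_sub]
      rw [Real.exp_neg]
      rw [show (1 : ℝ) + (Real.exp α)⁻¹ = (1 + Real.exp α) / Real.exp α by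
        field_simp; ring]
      rw [Real.log_div (ne_of_gt hden) (ne_of_gt hea)]
    have hlogp : Real.log (1 + Real.exp α) = -Real.log (1 - p) := by
      rw [hp, show (1:ℝ) - Real.exp α / (1 + Real.exp α) = 1 / (1 + Real.exp α) by
        field_simp; ring]
      rw [Real.log_div one_ne_zero (ne_of_gt hden), Real.log_one]
      ring
    have hg := gibbs η hη p ⟨hp0, hp1⟩
    unfold logitLoss binEntropy
    rw [hlogm, hlogp]
    have hrhs : η * (-Real.log p / Real.log 2) + (1 - η) * (-Real.log (1 - p) / Real.log 2)
        = (-(η * Real.log p) - (1 - η) * Real.log (1 - p)) / Real.log 2 := by ring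
    have hlhs : -(η * Real.log η) / Real.log 2 - (1 - η) * Real.log (1 - η) / Real.log 2
        = (-(η * Real.log η) - (1 - η) * Real.log (1 - η)) / Real.log 2 := by ring
    rw [hrhs, hlhs]
    gcongr
  · intro η ⟨h0, h1⟩
    have h1' : 0 < 1 - η := by linarith
    have hexp : Real.exp (Real.log (η / (1 - η))) = η / (1 - η) :=
      Real.exp_log (by positivity)
    have hexpn : Real.exp (-(Real.log (η / (1 - η)))) = (1 - η) / η := by
      rw [Real.exp_neg, hexp, inv_div]
    unfold logitLoss binEntropy
    rw [hexp, hexpn]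
    rw [show (1:ℝ) + (1 - η) / η = 1 / η by field_simp; ring,
        show (1:ℝ) + η / (1 - η) = 1 / (1 - η) by field_simp; ring]
    rw [Real.log_div one_ne_zero (ne_of_gt h0), Real.log_div one_ne_zero (ne_of_gt h1'),
        Real.log_one]
    ring
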